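/- For any orthonormal vectors v₁, v₂, v₃ in ℝ⁷, one has |φ(v₁, v₂, v₃)| ≤ 1. (That is, the 3-form φ is a calibration on ℝ⁷.) -/

import Mathlib

noncomputable section

open scoped InnerProductSpace

/-- The coefficient of `dx_a ∧ dx_b ∧ dx_c` evaluated on `(x, y, z)`:
a `3 × 3` determinant of the corresponding coordinates. -/
def det3 (a b c : Fin 7) (x y z : EuclideanSpace ℝ (Fin 7)) : ℝ :=
  x a * (y b * z c - y c * z b) - x b * (y a * z c - y c * z a) +
    x c * (y a * z b - y b * z a)

/-- The associative calibration `φ` of Harvey–Lawson on `ℝ⁷` (indices `0,…,6`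
corresponding to `x_1,…,x_7`):
`φ = dx₅∧dx₆∧dx₇ − dx₅∧(dx₁∧dx₂ + dx₃∧dx₄) − dx₆∧(dx₁∧dx₃ + dx₄∧dx₂)
   − dx₇∧(dx₁∧dx₄ + dx₂∧dx₃)`. -/
def phi (x y z : EuclideanSpace ℝ (Fin 7)) : ℝ :=
  det3 4 5 6 x y z - det3 4 0 1 x y z - det3 4 2 3 x y z -
    det3 5 0 2 x y z - det3 5 3 1 x y z - det3 6 0 3 x y z - det3 6 1 2 x y z

lemma vec7_0 (x0 x1 x2 x3 x4 x5 x6 : ℝ) : (![x0,x1,x2,x3,x4,x5,x6] : Fin 7 → ℝ) 0 = x0 := rfl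
lemma vec7_1 (x0 x1 x2 x3 x4 x5 x6 : ℝ) : (![x0,x1,x2,x3,x4,x5,x6] : Fin 7 → ℝ) 1 = x1 := rfl
lemma vec7_2 (x0 x1 x2 x3 x4 x5 x6 : ℝ) : (![x0,x1,x2,x3,x4,x5,x6] : Fin 7 → ℝ) 2 = x2 := rfl
lemma vec7_3 (x0 x1 x2 x3 x4 x5 x6 : ℝ) : (![x0,x1,x2,x3,x4,x5,x6] : Fin 7 → ℝ) 3 = x3 := rfl
lemma vec7_4 (x0 x1 x2 x3 x4 x5 x6 : ℝ) : (![x0,x1,x2,x3,x4,x5,x6] : Fin 7 → ℝ) 4 = x4 := rfl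
lemma vec7_5 (x0 x1 x2 x3 x4 x5 x6 : ℝ) : (![x0,x1,x2,x3,x4,x5,x6] : Fin 7 → ℝ) 5 = x5 := rfl
lemma vec7_6 (x0 x1 x2 x3 x4 x5 x6 : ℝ) : (![x0,x1,x2,x3,x4,x5,x6] : Fin 7 → ℝ) 6 = x6 := rfl

/-- The cross product of `x` and `y` associated to `phi`. -/
def crossW (x y : EuclideanSpace ℝ (Fin 7)) : Fin 7 → ℝ :=
  ![(x 4 * y 1 - x 1 * y 4) + (x 5 * y 2 - x 2 * y 5) + (x 6 * y 3 - x 3 * y 6),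
    (x 0 * y 4 - x 4 * y 0) + (x 3 * y 5 - x 5 * y 3) + (x 6 * y 2 - x 2 * y 6),
    (x 4 * y 3 - x 3 * y 4) + (x 0 * y 5 - x 5 * y 0) + (x 1 * y 6 - x 6 * y 1),
    (x 2 * y 4 - x 4 * y 2) + (x 5 * y 1 - x 1 * y 5) + (x 0 * y 6 - x 6 * y 0),
    (x 5 * y 6 - x 6 * y 5) + (x 1 * y 0 - x 0 * y 1) + (x 3 * y 2 - x 2 * y 3),
    (x 6 * y 4 - x 4 * y 6) + (x 2 * y 0 - x 0 * y 2) + (x 1 * y 3 - x 3 * y 1),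
    (x 4 * y 5 - x 5 * y 4) + (x 3 * y 0 - x 0 * y 3) + (x 2 * y 1 - x 1 * y 2)]

/-- The 3-form `φ` is a calibration: `|φ(v₁, v₂, v₃)| ≤ 1` for any orthonormal
vectors `v₁, v₂, v₃` in `ℝ⁷`. -/
theorem abs_phi_le_one_of_orthonormal (v : Fin 3 → EuclideanSpace ℝ (Fin 7))
    (hv : Orthonormal ℝ v) : |phi (v 0) (v 1) (v 2)| ≤ 1 := by
  have key : ∀ i j : Fin 3, ∑ k, v i k * v j k = if i = j then (1:ℝ) else 0 := by
    intro i j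
    have h := (orthonormal_iff_ite.mp hv) i j
    simpa [PiLp.inner_apply, RCLike.inner_apply, conj_trivial, mul_comm] using h
  have ha := key 0 0
  have hb := key 1 1
  have hc := key 2 2
  have hab := key 0 1
  norm_num [Fin.sum_univ_seven] at ha hb hc hab
  rw [← sq_le_one_iff_abs_le_one]
  have hphi : phi (v 0) (v 1) (v 2) = ∑ k, crossW (v 0) (v 1) k * v 2 k := by
    simp only [phi, det3, crossW, Fin.sum_univ_seven,
      vec7_0, vec7_1, vec7_2, vec7_3, vec7_4, vec7_5, vec7_6]
    ring
  have hA : ∑ k, crossW (v 0) (v 1) k ^ 2 = 1 := by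
    simp only [crossW, Fin.sum_univ_seven,
      vec7_0, vec7_1, vec7_2, vec7_3, vec7_4, vec7_5, vec7_6]
    linear_combination (v 1 0 * v 1 0 + v 1 1 * v 1 1 + v 1 2 * v 1 2 + v 1 3 * v 1 3 + v 1 4 * v 1 4 + v 1 5 * v 1 5 + v 1 6 * v 1 6) * ha + hb - (v 0 0 * v 1 0 + v 0 1 * v 1 1 + v 0 2 * v 1 2 + v 0 3 * v 1 3 + v 0 4 * v 1 4 + v 0 5 * v 1 5 + v 0 6 * v 1 6) * hab
  have hB : ∑ k, (v 2 k) ^ 2 = 1 := by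
    simp only [Fin.sum_univ_seven]
    linear_combination hc
  rw [hphi]
  calc (∑ k, crossW (v 0) (v 1) k * v 2 k) ^ 2
      ≤ (∑ k, crossW (v 0) (v 1) k ^ 2) * ∑ k, (v 2 k) ^ 2 :=
        Finset.sum_mul_sq_le_sq_mul_sq _ _ _
    _ = 1 := by rw [hA, hB, mul_one]
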